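/- Let E, A ∈ ℂ^{n×n} with pencil (E, A) regular, Q, P invertible with QEP = diag(I_{n₁}, N_f), QAP = diag(A_s, I_{n₂}), N_f nilpotent, QB = [B_s; B_f]. If there exists K_s with all eigenvalues of A_s + B_s K_s of modulus < 1, then K = [K_s, 0]P^{-1} satisfies: every s ∈ ℂ with det(sE − (A + BK)) = 0 has |s| < 1. -/

import Mathlib

open Matrix

theorem stmt_13 {n₁ n₂ m : ℕ}
    (E A Q P : Matrix (Fin n₁ ⊕ Fin n₂) (Fin n₁ ⊕ Fin n₂) ℂ)
    (B : Matrix (Fin n₁ ⊕ Fin n₂) (Fin m) ℂ)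
    (As : Matrix (Fin n₁) (Fin n₁) ℂ) (Nf : Matrix (Fin n₂) (Fin n₂) ℂ)
    (Bs : Matrix (Fin n₁) (Fin m) ℂ) (Bf : Matrix (Fin n₂) (Fin m) ℂ)
    (Ks : Matrix (Fin m) (Fin n₁) ℂ)
    (hreg : ∃ s : ℂ, (s • E - A).det ≠ 0)
    (hQ : IsUnit Q) (hP : IsUnit P) (hNf : IsNilpotent Nf)
    (hE : Q * E * P = Matrix.fromBlocks 1 0 0 Nf)
    (hA : Q * A * P = Matrix.fromBlocks As 0 0 1)
    (hB : Q * B = Matrix.fromRows Bs Bf)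
    (hstab : ∀ s : ℂ, (s • (1 : Matrix (Fin n₁) (Fin n₁) ℂ) - (As + Bs * Ks)).det = 0 →
      ‖s‖ < 1) :
    ∀ s : ℂ, (s • E - (A + B * (Matrix.fromCols Ks (0 : Matrix (Fin m) (Fin n₂) ℂ) * P⁻¹))).det = 0 →
      ‖s‖ < 1 := by
  intro s hs
  have hPdet : IsUnit P.det := (Matrix.isUnit_iff_isUnit_det P).mp hP
  have hQdet : IsUnit Q.det := (Matrix.isUnit_iff_isUnit_det Q).mp hQ
  have hPinv : P⁻¹ * P = 1 := Matrix.nonsing_inv_mul P hPdet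
  have hM : Q * (s • E - (A + B * (Matrix.fromCols Ks (0 : Matrix (Fin m) (Fin n₂) ℂ) * P⁻¹))) * P =
      Matrix.fromBlocks (s • 1 - (As + Bs * Ks)) 0 (-(Bf * Ks)) (s • Nf - 1) := by
    have h1 : Q * (B * (Matrix.fromCols Ks (0 : Matrix (Fin m) (Fin n₂) ℂ) * P⁻¹)) * P
        = Matrix.fromBlocks (Bs * Ks) 0 (Bf * Ks) 0 := by
      calc Q * (B * (Matrix.fromCols Ks (0 : Matrix (Fin m) (Fin n₂) ℂ) * P⁻¹)) * P
          = (Q * B) * Matrix.fromCols Ks (0 : Matrix (Fin m) (Fin n₂) ℂ) * (P⁻¹ * P) := by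
            simp only [Matrix.mul_assoc]
        _ = Matrix.fromRows Bs Bf * Matrix.fromCols Ks (0 : Matrix (Fin m) (Fin n₂) ℂ) := by
            rw [hB, hPinv, mul_one]
        _ = Matrix.fromBlocks (Bs * Ks) (Bs * 0) (Bf * Ks) (Bf * 0) :=
            Matrix.fromRows_mul_fromCols _ _ _ _
        _ = Matrix.fromBlocks (Bs * Ks) 0 (Bf * Ks) 0 := by
            rw [Matrix.mul_zero, Matrix.mul_zero]
    have h2 : Q * (s • E) * P = s • (Q * E * P) := by
      rw [Matrix.mul_smul, Matrix.smul_mul]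
    rw [Matrix.mul_sub, Matrix.sub_mul, Matrix.mul_add, Matrix.add_mul, h2, hE, h1, hA,
      Matrix.fromBlocks_smul]
    ext (i | i) (j | j) <;>
      simp [Matrix.fromBlocks, Matrix.sub_apply, Matrix.add_apply]
  have hdet : Q.det * ((s • E - (A + B * (Matrix.fromCols Ks (0 : Matrix (Fin m) (Fin n₂) ℂ) * P⁻¹))).det) * P.det
      = (s • 1 - (As + Bs * Ks)).det * (s • Nf - 1).det := by
    rw [← Matrix.det_mul, ← Matrix.det_mul, hM, Matrix.det_fromBlocks_zero₁₂]
  have hNfdet : (s • Nf - 1).det ≠ 0 := by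
    have h : IsNilpotent (s • Nf) := hNf.smul s
    have hu : IsUnit (1 - s • Nf) := h.isUnit_one_sub
    have : IsUnit (s • Nf - 1) := by
      rw [← neg_sub]; exact hu.neg
    intro h0
    exact ((Matrix.isUnit_iff_isUnit_det _).mp this).ne_zero h0
  apply hstab
  rw [hs] at hdet
  simp only [mul_zero, zero_mul] at hdet
  rcases mul_eq_zero.mp hdet.symm with h | h
  · exact h
  · exact absurd h hNfdet
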